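/- For μ_x ∈ (0,1) and z ∈ ℂ with |z| > 1, the two roots κ of κ² + ((z - z⁻¹)/μ_x) κ - 1 = 0 satisfy: their product equals -1, and exactly one of them has modulus strictly less than 1 while the other has modulus strictly greater than 1. -/

import Mathlib

/-- Auxiliary: for `μ ∈ (0,1)` and `|z| > 1`, the characteristic equation has
no root of modulus exactly `1`. -/
theorem leapfrog_no_unimodular_root (μ : ℝ) (hμ0 : 0 < μ) (hμ1 : μ < 1)
    (z : ℂ) (hz : 1 < ‖z‖)
    (κ : ℂ) (hκ : κ ^ 2 + ((z - z⁻¹) / (μ : ℂ)) * κ - 1 = 0) : ‖κ‖ ≠ 1 := by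
  intro h1
  have hz0 : z ≠ 0 := by intro h; simp [h] at hz; linarith
  have hμC : (μ:ℂ) ≠ 0 := by exact_mod_cast hμ0.ne'
  have hκ' : (μ:ℂ) * z * κ^2 + (z^2 - 1) * κ - (μ:ℂ) * z = 0 := by
    field_simp at hκ
    linear_combination hκ
  have hconj : κ * (starRingEnd ℂ) κ = 1 := by
    rw [Complex.mul_conj]
    norm_cast
    simp [Complex.normSq_eq_norm_sq, h1]
  have hc : (starRingEnd ℂ) κ - κ = (-2 * (κ.im : ℂ)) * Complex.I := by
    apply Complex.ext <;> simp <;> ring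
  set s : ℝ := μ * (-2 * κ.im) with hs
  have hzeq : z^2 - (s : ℂ) * Complex.I * z - 1 = 0 := by
    push_cast [hs]
    linear_combination (starRingEnd ℂ) κ * hκ' + (1 - z^2 - (μ:ℂ)*z*κ) * hconj
      + (μ:ℂ) * z * hc
  have him : |κ.im| ≤ 1 := by
    have := Complex.abs_im_le_norm κ
    rwa [h1] at this
  have h2 : κ.im^2 ≤ 1 := by nlinarith [abs_nonneg κ.im, sq_abs κ.im]
  have hs2 : s^2 < 4 := by
    have hss : s^2 = 4*μ^2*κ.im^2 := by rw [hs]; ring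
    nlinarith [sq_nonneg κ.im, mul_pos hμ0 hμ0]
  set x := z.re; set y := z.im
  have hre : x^2 - y^2 + s*y - 1 = 0 := by
    have := congrArg Complex.re hzeq
    simpa [Complex.ext_iff, pow_two, Complex.mul_re, Complex.mul_im] using this
  have him2 : x * (2*y - s) = 0 := by
    have := congrArg Complex.im hzeq
    simp [pow_two, Complex.mul_re, Complex.mul_im] at this
    nlinarith [this]
  have hnorm : 1 < x^2 + y^2 := by
    have habs : ‖z‖ ^ 2 = x^2 + y^2 := by
      rw [Complex.sq_norm]; simp [Complex.normSq_apply, pow_two, x, y]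
    nlinarith [norm_nonneg z]
  rcases mul_eq_zero.mp him2 with hx | hy
  · nlinarith [sq_nonneg (2*y - s)]
  · have hone : x^2 + y^2 - 1 = 0 := by linear_combination hre + y * hy
    linarith

/-- For `μ ∈ (0,1)` and `|z| > 1`, the characteristic equation
`κ² + ((z - z⁻¹)/μ) κ - 1 = 0` has two roots whose product is `-1`,
one of modulus `< 1` and the other of modulus `> 1`. -/
theorem leapfrog_char_root_splitting (μ : ℝ) (hμ0 : 0 < μ) (hμ1 : μ < 1)
    (z : ℂ) (hz : 1 < ‖z‖) :
    ∃ κs κu : ℂ,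
      κs ^ 2 + ((z - z⁻¹) / (μ : ℂ)) * κs - 1 = 0 ∧
      κu ^ 2 + ((z - z⁻¹) / (μ : ℂ)) * κu - 1 = 0 ∧
      κs * κu = -1 ∧ ‖κs‖ < 1 ∧ 1 < ‖κu‖ ∧
      ∀ κ : ℂ, κ ^ 2 + ((z - z⁻¹) / (μ : ℂ)) * κ - 1 = 0 → κ = κs ∨ κ = κu := by
  have noUni := leapfrog_no_unimodular_root μ hμ0 hμ1 z hz
  set b : ℂ := (z - z⁻¹) / (μ : ℂ) with hb
  obtain ⟨d, hd⟩ : ∃ d : ℂ, d ^ 2 = b ^ 2 + 4 :=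
    ⟨(b ^ 2 + 4) ^ (((2:ℕ):ℂ))⁻¹, by
      have := Complex.cpow_nat_inv_pow (b ^ 2 + 4) two_ne_zero
      simpa using this⟩
  set κ1 : ℂ := (-b + d) / 2 with hκ1
  set κ2 : ℂ := (-b - d) / 2 with hκ2
  have e1 : κ1 ^ 2 + b * κ1 - 1 = 0 := by rw [hκ1]; linear_combination hd / 4
  have e2 : κ2 ^ 2 + b * κ2 - 1 = 0 := by rw [hκ2]; linear_combination hd / 4
  have eprod : κ1 * κ2 = -1 := by rw [hκ1, hκ2]; linear_combination -hd / 4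
  have hnormprod : ‖κ1‖ * ‖κ2‖ = 1 := by
    rw [← norm_mul, eprod]; simp
  have hn1 : ‖κ1‖ ≠ 1 := noUni κ1 e1
  have hn2 : ‖κ2‖ ≠ 1 := noUni κ2 e2
  have huniq : ∀ κ : ℂ, κ ^ 2 + b * κ - 1 = 0 → κ = κ1 ∨ κ = κ2 := by
    intro κ hκ
    have : (κ - κ1) * (κ - κ2) = 0 := by
      rw [hκ1, hκ2]; linear_combination hκ - hd / 4
    rcases mul_eq_zero.mp this with h | h
    · exact Or.inl (sub_eq_zero.mp h)
    · exact Or.inr (sub_eq_zero.mp h)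
  rcases lt_trichotomy ‖κ1‖ 1 with h | h | h
  · have h2 : 1 < ‖κ2‖ := by
      rcases lt_trichotomy ‖κ2‖ 1 with h' | h' | h'
      · nlinarith [norm_nonneg κ1, norm_nonneg κ2]
      · exact absurd h' hn2
      · exact h'
    exact ⟨κ1, κ2, e1, e2, eprod, h, h2, huniq⟩
  · exact absurd h hn1
  · have h2 : ‖κ2‖ < 1 := by
      rcases lt_trichotomy ‖κ2‖ 1 with h' | h' | h'
      · exact h'
      · exact absurd h' hn2
      · nlinarith [norm_nonneg κ1, norm_nonneg κ2]
    exact ⟨κ2, κ1, e2, e1, by rw [mul_comm]; exact eprod, h2, h, fun κ hκ => (huniq κ hκ).symm⟩
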